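/- (Curvature attenuation) Let L : EuclideanSpace ℝ (Fin d) → ℝ be twice continuously differentiable, let m₁, …, m_K ∈ EuclideanSpace ℝ (Fin d) satisfy 0 ≤ (m_k)_i ≤ 1 for all k and i, and let p₁, …, p_K ≥ 0 with Σ_{k=1}^K p_k = 1. Define L̄(θ) = Σ_{k=1}^K p_k L(m_k ⊙ θ). Fix θ and suppose λ ≥ 0 is such that for every k and every w ∈ EuclideanSpace ℝ (Fin d), D²L(m_k ⊙ θ)(w, w) ≤ λ ‖w‖². Then for every u ∈ EuclideanSpace ℝ (Fin d), D²L̄(θ)(u, u) ≤ λ ‖u‖². In particular, the maximum curvature of the smoothed objective at θ is bounded by the maximum curvature of the original objective over the masked points. -/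

import Mathlib

/-- Hadamard (coordinatewise) product on `EuclideanSpace ℝ (Fin d)`. -/
noncomputable def hadamard {d : ℕ} (m x : EuclideanSpace ℝ (Fin d)) :
    EuclideanSpace ℝ (Fin d) :=
  WithLp.toLp 2 (fun i => m i * x i)

/-- The Hadamard product with a fixed vector as a continuous linear map. -/
noncomputable def hadamardCLM {d : ℕ} (m : EuclideanSpace ℝ (Fin d)) :
    EuclideanSpace ℝ (Fin d) →L[ℝ] EuclideanSpace ℝ (Fin d) :=
  LinearMap.toContinuousLinearMap
    { toFun := hadamard m
      map_add' := by
        intro x y; ext i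
        simp [hadamard, mul_add]
      map_smul' := by
        intro c x; ext i
        simp [hadamard]; ring }

lemma hadamardCLM_apply {d : ℕ} (m x : EuclideanSpace ℝ (Fin d)) :
    hadamardCLM m x = hadamard m x := rfl

lemma hadamard_norm_le {d : ℕ} (m u : EuclideanSpace ℝ (Fin d))
    (hm : ∀ i, 0 ≤ m i ∧ m i ≤ 1) : ‖hadamard m u‖ ≤ ‖u‖ := by
  rw [EuclideanSpace.norm_eq, EuclideanSpace.norm_eq]
  apply Real.sqrt_le_sqrt
  apply Finset.sum_le_sum
  intro i _
  have h1 : ‖hadamard m u i‖ ≤ ‖u i‖ := by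
    simp only [hadamard, PiLp.toLp_apply, Real.norm_eq_abs, abs_mul]
    have := hm i
    calc |m i| * |u i| ≤ 1 * |u i| := by
          apply mul_le_mul_of_nonneg_right _ (abs_nonneg _)
          rw [abs_of_nonneg this.1]; exact this.2
      _ = |u i| := one_mul _
  exact pow_le_pow_left₀ (norm_nonneg _) h1 2

theorem smoothed_curvature_attenuation {d K : ℕ} (L : EuclideanSpace ℝ (Fin d) → ℝ)
    (hL : ContDiff ℝ 2 L)
    (m : Fin K → EuclideanSpace ℝ (Fin d))
    (hm : ∀ k, ∀ i, 0 ≤ m k i ∧ m k i ≤ 1)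
    (p : Fin K → ℝ) (hp : ∀ k, 0 ≤ p k) (hp1 : ∑ k, p k = 1)
    (θ : EuclideanSpace ℝ (Fin d)) (lam : ℝ) (hlam : 0 ≤ lam)
    (hH : ∀ k, ∀ w : EuclideanSpace ℝ (Fin d),
      fderiv ℝ (fderiv ℝ L) (hadamard (m k) θ) w w ≤ lam * ‖w‖ ^ 2) :
    ∀ u : EuclideanSpace ℝ (Fin d),
      fderiv ℝ (fderiv ℝ (fun θ' => ∑ k, p k * L (hadamard (m k) θ'))) θ u u
        ≤ lam * ‖u‖ ^ 2 := by
  intro u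
  set M : Fin K → (EuclideanSpace ℝ (Fin d) →L[ℝ] EuclideanSpace ℝ (Fin d)) := fun k => hadamardCLM (m k) with hM
  have hLd : Differentiable ℝ L := hL.differentiable (by norm_num)
  have hL1 : ContDiff ℝ 1 (fderiv ℝ L) := hL.fderiv_right (le_refl 2)
  have hL1d : Differentiable ℝ (fderiv ℝ L) := hL1.differentiable (by norm_num)
  -- derivative of f
  have hA : ∀ x : EuclideanSpace ℝ (Fin d), HasFDerivAt (fun θ' : EuclideanSpace ℝ (Fin d) => ∑ k, p k * L (hadamard (m k) θ'))
      (∑ k, p k • ((fderiv ℝ L (M k x)).comp (M k))) x := by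
    intro x
    apply HasFDerivAt.fun_sum
    intro k _
    have h1 : HasFDerivAt (fun θ' : EuclideanSpace ℝ (Fin d) => L (hadamard (m k) θ'))
        ((fderiv ℝ L (M k x)).comp (M k)) x := by
      exact ((hLd (M k x)).hasFDerivAt).comp x ((M k).hasFDerivAt)
    exact h1.const_mul (p k)
  have hfd : (fderiv ℝ (fun θ' : EuclideanSpace ℝ (Fin d) => ∑ k, p k * L (hadamard (m k) θ')))
      = fun x : EuclideanSpace ℝ (Fin d) => ∑ k, p k • ((fderiv ℝ L (M k x)).comp (M k)) := by
    funext x; exact (hA x).fderiv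
  rw [hfd]
  set Φ : Fin K → ((EuclideanSpace ℝ (Fin d) →L[ℝ] ℝ) →L[ℝ] (EuclideanSpace ℝ (Fin d) →L[ℝ] ℝ)) :=
    fun k => (ContinuousLinearMap.compL ℝ (EuclideanSpace ℝ (Fin d)) (EuclideanSpace ℝ (Fin d)) ℝ).flip (M k) with hΦ
  have hB : HasFDerivAt (fun x : EuclideanSpace ℝ (Fin d) => ∑ k, p k • ((fderiv ℝ L (M k x)).comp (M k)))
      (∑ k, p k • ((Φ k).comp ((fderiv ℝ (fderiv ℝ L) (M k θ)).comp (M k)))) θ := by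
    apply HasFDerivAt.fun_sum
    intro k _
    have h1 : HasFDerivAt (fun x : EuclideanSpace ℝ (Fin d) => fderiv ℝ L (M k x))
        ((fderiv ℝ (fderiv ℝ L) (M k θ)).comp (M k)) θ :=
      ((hL1d (M k θ)).hasFDerivAt).comp θ ((M k).hasFDerivAt)
    have h2 : HasFDerivAt (fun x : EuclideanSpace ℝ (Fin d) => (Φ k) (fderiv ℝ L (M k x)))
        ((Φ k).comp ((fderiv ℝ (fderiv ℝ L) (M k θ)).comp (M k))) θ :=
      ((Φ k).hasFDerivAt).comp θ h1
    have h3 : (fun x : EuclideanSpace ℝ (Fin d) => (Φ k) (fderiv ℝ L (M k x)))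
        = fun x : EuclideanSpace ℝ (Fin d) => (fderiv ℝ L (M k x)).comp (M k) := rfl
    rw [h3] at h2
    exact h2.const_smul (p k)
  rw [hB.fderiv]
  have hexp : (∑ k, p k • ((Φ k).comp ((fderiv ℝ (fderiv ℝ L) (M k θ)).comp (M k)))) u u
      = ∑ k, p k * (fderiv ℝ (fderiv ℝ L) (M k θ) (M k u) (M k u)) := by
    simp [ContinuousLinearMap.sum_apply, ContinuousLinearMap.smul_apply,
      ContinuousLinearMap.comp_apply, Φ]
  rw [hexp]
  have hMθ : ∀ k, M k θ = hadamard (m k) θ := fun k => rfl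
  calc ∑ k, p k * (fderiv ℝ (fderiv ℝ L) (M k θ) (M k u) (M k u))
      ≤ ∑ k, p k * (lam * ‖u‖ ^ 2) := by
        apply Finset.sum_le_sum
        intro k _
        apply mul_le_mul_of_nonneg_left _ (hp k)
        have h1 := hH k (M k u)
        rw [hMθ k]
        refine h1.trans ?_
        apply mul_le_mul_of_nonneg_left _ hlam
        have := hadamard_norm_le (m k) u (hm k)
        calc ‖(M k) u‖ ^ 2 = ‖hadamard (m k) u‖ ^ 2 := rfl
          _ ≤ ‖u‖ ^ 2 := pow_le_pow_left₀ (norm_nonneg _) this 2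
    _ = lam * ‖u‖ ^ 2 := by rw [← Finset.sum_mul, hp1, one_mul]
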